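/- With X_{rs} = (E_{rs}+E_{sr})/√2, Y_{rs} = (E_{rs}−E_{sr})/√2, D_t = E_{tt}, let B⁺ = { (1/√2)[[Y_{rs},0],[0,Y_{rs}]], (1/√2)[[iX_{rs},0],[0,−iX_{rs}]] : r < s } ∪ { (1/√2)[[iD_t,0],[0,−iD_t]] : 1 ≤ t ≤ n } and B⁻ = { (1/√2)[[0,Y_{rs}],[−Y_{rs},0]], (1/√2)[[0,iY_{rs}],[iY_{rs},0]] : r < s }. Then ∑_{Z ∈ B⁺} Z² − ∑_{Z ∈ B⁻} Z² = −((2n−1)/2) · I_{2n}. -/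

import Mathlib

open Matrix

/-- `X_{rs} = (E_{rs}+E_{sr})/√2` -/
noncomputable def Xm (n : ℕ) (r s : Fin n) : Matrix (Fin n) (Fin n) ℂ :=
  (Real.sqrt 2 : ℂ)⁻¹ • (single r s (1 : ℂ) + single s r (1 : ℂ))

/-- `Y_{rs} = (E_{rs}−E_{sr})/√2` -/
noncomputable def Ym (n : ℕ) (r s : Fin n) : Matrix (Fin n) (Fin n) ℂ :=
  (Real.sqrt 2 : ℂ)⁻¹ • (single r s (1 : ℂ) - single s r (1 : ℂ))

/-- `D_t = E_{tt}` -/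
def Dm (n : ℕ) (t : Fin n) : Matrix (Fin n) (Fin n) ℂ := single t t (1 : ℂ)

lemma c2_sq : (Real.sqrt 2 : ℂ)⁻¹ * (Real.sqrt 2 : ℂ)⁻¹ = (2:ℂ)⁻¹ := by
  rw [← mul_inv, ← Complex.ofReal_mul, Real.mul_self_sqrt (by norm_num)]
  norm_num

lemma Ym_sq {n : ℕ} {r s : Fin n} (h : r ≠ s) :
    Ym n r s * Ym n r s
      = (-(2:ℂ)⁻¹) • (single r r (1:ℂ) + single s s (1:ℂ)) := by
  rw [Ym, smul_mul_smul_comm, c2_sq]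
  simp only [sub_mul, mul_sub, single_mul_single_same,
    single_mul_single_of_ne (1:ℂ) s r s h, single_mul_single_of_ne (1:ℂ) r s r h.symm]
  ext i j
  simp
  ring

lemma Xm_sq {n : ℕ} {r s : Fin n} (h : r ≠ s) :
    Xm n r s * Xm n r s
      = ((2:ℂ)⁻¹) • (single r r (1:ℂ) + single s s (1:ℂ)) := by
  rw [Xm, smul_mul_smul_comm, c2_sq]
  simp only [add_mul, mul_add, single_mul_single_same,
    single_mul_single_of_ne (1:ℂ) s r s h, single_mul_single_of_ne (1:ℂ) r s r h.symm]
  ext i j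
  simp
  ring

lemma sum_diag_one (n : ℕ) :
    ∑ r : Fin n, single r r (1:ℂ) = 1 := by
  ext i j
  rw [Matrix.sum_apply]
  by_cases hij : i = j
  · subst hij
    rw [Finset.sum_eq_single i (fun b _ hb => by simp [single, hb]) (by simp)]
    simp [single]
  · rw [Matrix.one_apply_ne hij]
    refine Finset.sum_eq_zero fun x _ => ?_
    simp only [single, of_apply, ite_eq_right_iff, and_imp]
    rintro rfl rfl; exact absurd rfl hij

lemma plus_pair {n : ℕ} {r s : Fin n} (h : r ≠ s) :
    ((Real.sqrt 2 : ℂ)⁻¹ • fromBlocks (Ym n r s) 0 0 (Ym n r s)) ^ 2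
      + ((Real.sqrt 2 : ℂ)⁻¹ •
          fromBlocks (Complex.I • Xm n r s) 0 0 (-(Complex.I • Xm n r s))) ^ 2
    = (-(2:ℂ)⁻¹) • fromBlocks (single r r (1:ℂ) + single s s 1) 0 0
        (single r r (1:ℂ) + single s s 1) := by
  rw [sq, sq, smul_mul_smul_comm, smul_mul_smul_comm, c2_sq,
    fromBlocks_multiply, fromBlocks_multiply]
  simp only [Matrix.mul_zero, Matrix.zero_mul, add_zero, zero_add, neg_mul_neg,
    smul_mul_smul_comm, Complex.I_mul_I, Ym_sq h, Xm_sq h, neg_one_smul,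
    Matrix.fromBlocks_smul, Matrix.fromBlocks_add, smul_zero, add_zero]
  ext (i|i) (j|j) <;> simp [Matrix.smul_apply, Matrix.add_apply, smul_smul, single,
    Matrix.of_apply] <;> split_ifs <;> norm_num

lemma minus_pair {n : ℕ} {r s : Fin n} (h : r ≠ s) :
    ((Real.sqrt 2 : ℂ)⁻¹ • fromBlocks 0 (Ym n r s) (-(Ym n r s)) 0) ^ 2
      + ((Real.sqrt 2 : ℂ)⁻¹ •
          fromBlocks 0 (Complex.I • Ym n r s) (Complex.I • Ym n r s) 0) ^ 2
    = ((2:ℂ)⁻¹) • fromBlocks (single r r (1:ℂ) + single s s 1) 0 0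
        (single r r (1:ℂ) + single s s 1) := by
  rw [sq, sq, smul_mul_smul_comm, smul_mul_smul_comm, c2_sq,
    fromBlocks_multiply, fromBlocks_multiply]
  simp only [Matrix.mul_zero, Matrix.zero_mul, add_zero, zero_add, Matrix.mul_neg,
    Matrix.neg_mul, neg_neg, smul_mul_smul_comm, Complex.I_mul_I, Ym_sq h, neg_one_smul,
    Matrix.fromBlocks_smul, Matrix.fromBlocks_add, smul_zero, add_zero]
  ext (i|i) (j|j) <;> simp [Matrix.smul_apply, Matrix.add_apply, smul_smul, single,
    Matrix.of_apply] <;> split_ifs <;> norm_num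

lemma d_term {n : ℕ} (t : Fin n) :
    ((Real.sqrt 2 : ℂ)⁻¹ • fromBlocks (Complex.I • Dm n t) 0 0 (-(Complex.I • Dm n t))) ^ 2
    = (-(2:ℂ)⁻¹) • fromBlocks (single t t (1:ℂ)) 0 0 (single t t (1:ℂ)) := by
  rw [sq, smul_mul_smul_comm, c2_sq, fromBlocks_multiply]
  simp only [Matrix.mul_zero, Matrix.zero_mul, add_zero, zero_add, neg_mul_neg,
    smul_mul_smul_comm, Complex.I_mul_I, neg_one_smul, Dm, single_mul_single_same, mul_one,
    Matrix.fromBlocks_smul, smul_zero]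
  ext (i|i) (j|j) <;> simp [Matrix.smul_apply, Matrix.add_apply, smul_smul, single,
    Matrix.of_apply] <;> split_ifs <;> norm_num

lemma sum_pairs (n : ℕ) (hn : 1 ≤ n) :
    ∑ p ∈ Finset.univ.filter (fun p : Fin n × Fin n => p.1 < p.2),
      (single p.1 p.1 (1:ℂ) + single p.2 p.2 1)
    = ((n:ℂ) - 1) • (1 : Matrix (Fin n) (Fin n) ℂ) := by
  rw [Finset.sum_add_distrib]
  have h2 : ∑ p ∈ Finset.univ.filter (fun p : Fin n × Fin n => p.1 < p.2),
        single p.2 p.2 (1:ℂ)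
      = ∑ p ∈ Finset.univ.filter (fun p : Fin n × Fin n => p.2 < p.1),
        single p.1 p.1 (1:ℂ) := by
    exact Finset.sum_nbij' (fun p => (p.2, p.1)) (fun p => (p.2, p.1))
      (by simp) (by simp) (by simp) (by simp) (by simp)
  rw [h2, ← Finset.sum_union (by
    rw [Finset.disjoint_filter]
    intro p _ h1
    simp only [not_lt]
    exact le_of_lt h1)]
  have h3 : (Finset.univ.filter (fun p : Fin n × Fin n => p.1 < p.2)
      ∪ Finset.univ.filter (fun p : Fin n × Fin n => p.2 < p.1))
      = Finset.univ.filter (fun p : Fin n × Fin n => p.1 ≠ p.2) := by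
    ext p
    simp only [Finset.mem_union, Finset.mem_filter, Finset.mem_univ, true_and,
      ne_iff_lt_or_gt]
  rw [h3, Finset.sum_filter, Fintype.sum_prod_type]
  have h4 : ∀ r : Fin n, (∑ s : Fin n, if r ≠ s then single r r (1:ℂ) else 0)
      = (n - 1) • single r r (1:ℂ) := by
    intro r
    rw [← Finset.sum_filter, Finset.sum_const, Finset.filter_ne, Finset.card_erase_of_mem
      (Finset.mem_univ r), Finset.card_univ, Fintype.card_fin]
  simp only [h4]
  rw [← Finset.smul_sum, sum_diag_one, ← Nat.cast_smul_eq_nsmul ℂ, Nat.cast_sub hn,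
    Nat.cast_one]

lemma fromBlocks_sum {n : ℕ} {ι : Type*} (s : Finset ι)
    (f : ι → Matrix (Fin n) (Fin n) ℂ) :
    ∑ i ∈ s, fromBlocks (f i) 0 0 (f i)
      = fromBlocks (∑ i ∈ s, f i) 0 0 (∑ i ∈ s, f i) := by
  classical
  induction s using Finset.induction with
  | empty => simp [Matrix.fromBlocks_zero]
  | insert _ _ h ih => simp [Finset.sum_insert h, ih, Matrix.fromBlocks_add]

/-- for the orthonormal bases `B⁺`, `B⁻` of the definite parts of
`so*(2n)`, `∑_{Z∈B⁺} Z² − ∑_{Z∈B⁻} Z² = −((2n−1)/2)·I_{2n}`. -/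
theorem casimir_soStar (n : ℕ) :
    ((∑ p ∈ Finset.univ.filter (fun p : Fin n × Fin n => p.1 < p.2),
      (((Real.sqrt 2 : ℂ)⁻¹ •
          fromBlocks (Ym n p.1 p.2) 0 0 (Ym n p.1 p.2)) ^ 2
      + ((Real.sqrt 2 : ℂ)⁻¹ •
          fromBlocks (Complex.I • Xm n p.1 p.2) 0 0 (-(Complex.I • Xm n p.1 p.2))) ^ 2))
    + ∑ t : Fin n,
      ((Real.sqrt 2 : ℂ)⁻¹ •
          fromBlocks (Complex.I • Dm n t) 0 0 (-(Complex.I • Dm n t))) ^ 2)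
    - (∑ p ∈ Finset.univ.filter (fun p : Fin n × Fin n => p.1 < p.2),
      (((Real.sqrt 2 : ℂ)⁻¹ •
          fromBlocks 0 (Ym n p.1 p.2) (-(Ym n p.1 p.2)) 0) ^ 2
      + ((Real.sqrt 2 : ℂ)⁻¹ •
          fromBlocks 0 (Complex.I • Ym n p.1 p.2) (Complex.I • Ym n p.1 p.2) 0) ^ 2))
    = (-((2 * (n : ℂ) - 1) / 2)) • (1 : Matrix (Fin n ⊕ Fin n) (Fin n ⊕ Fin n) ℂ) := by
  by_cases hn : n = 0
  · subst hn
    ext i j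
    rcases i with i | i <;> exact i.elim0
  replace hn : 1 ≤ n := Nat.one_le_iff_ne_zero.mpr hn
  rw [Finset.sum_congr rfl
      (fun p hp => plus_pair (Fin.ne_of_lt (Finset.mem_filter.mp hp).2)),
    Finset.sum_congr rfl
      (fun p hp => minus_pair (Fin.ne_of_lt (Finset.mem_filter.mp hp).2)),
    Finset.sum_congr rfl (fun t _ => d_term t),
    ← Finset.smul_sum, ← Finset.smul_sum, ← Finset.smul_sum,
    fromBlocks_sum, fromBlocks_sum,
    sum_pairs n hn, sum_diag_one]
  have hF : (fromBlocks (((n:ℂ)-1) • (1 : Matrix (Fin n) (Fin n) ℂ)) 0 0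
      (((n:ℂ)-1) • 1) : Matrix (Fin n ⊕ Fin n) (Fin n ⊕ Fin n) ℂ) = ((n:ℂ)-1) • 1 := by
    rw [← Matrix.fromBlocks_one (α := ℂ) (l := Fin n) (m := Fin n),
      Matrix.fromBlocks_smul, smul_zero]
  rw [hF, Matrix.fromBlocks_one]
  simp only [smul_smul]
  rw [← add_smul, ← sub_smul]
  congr 1
  ring
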